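/- Let γ = (α, σ) : ℝ → E × ℝ be a gradient flow line of the split interpolation function F. If σ(t₁) ∈ (0,1) for some t₁ ∈ ℝ, then σ(t) ∈ (0,1) for all t ∈ ℝ, σ is strictly increasing, and σ(t) → 0 as t → -∞ and σ(t) → 1 as t → +∞. That is, every gradient flow line of F whose ℝ-coordinate is not constant travels from the slice E × {0} (at -∞) to the slice E × {1} (at +∞). -/

import Mathlib

open Filter Topology

/-- The interpolation profile `h(s) = s³ - (3/2)s²`. -/
noncomputable def hfun (s : ℝ) : ℝ := s ^ 3 - (3 / 2) * s ^ 2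

/-- The split interpolation function `F(x,s) = f(x) + C·h(s)` on `E × ℝ`, where `E × ℝ`
carries the product (L²) inner product. -/
noncomputable def Fsplit {E : Type*} [NormedAddCommGroup E] [InnerProductSpace ℝ E]
    (f : E → ℝ) (C : ℝ) (p : WithLp 2 (E × ℝ)) : ℝ :=
  f ((WithLp.equiv 2 (E × ℝ)) p).1 + C * hfun ((WithLp.equiv 2 (E × ℝ)) p).2

lemma hfun_deriv (s : ℝ) : HasDerivAt hfun (3 * s ^ 2 - 3 * s) s := by
  have : HasDerivAt hfun ((3:ℕ) * s ^ 2 - (3/2) * ((2:ℕ) * s ^ 1)) s :=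
    (hasDerivAt_pow 3 s).sub ((hasDerivAt_pow 2 s).const_mul (3/2 : ℝ))
  convert this using 1; push_cast; ring

lemma grad_Fsplit {E : Type*} [NormedAddCommGroup E] [InnerProductSpace ℝ E]
    [CompleteSpace E] (f : E → ℝ) (hf : Differentiable ℝ f) (C : ℝ) (x : E) (s : ℝ) :
    gradient (Fsplit f C) ((WithLp.equiv 2 (E × ℝ)).symm (x, s)) =
      (WithLp.equiv 2 (E × ℝ)).symm (gradient f x, C * (3 * s ^ 2 - 3 * s)) := by
  set eL := WithLp.prodContinuousLinearEquiv 2 ℝ E ℝ with heL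
  set p := (WithLp.equiv 2 (E × ℝ)).symm (x, s) with hp
  set d := 3 * s ^ 2 - 3 * s with hdd
  have hd : HasDerivAt hfun d s := hfun_deriv s
  have h1 : HasFDerivAt (fun q : E × ℝ => f q.1 + C * hfun q.2)
      (((fderiv ℝ f x).comp (ContinuousLinearMap.fst ℝ E ℝ)) +
        C • ((ContinuousLinearMap.smulRight (1 : ℝ →L[ℝ] ℝ) d).comp
          (ContinuousLinearMap.snd ℝ E ℝ))) (x, s) :=
    ((hf x).hasFDerivAt.comp (x, s) hasFDerivAt_fst).add
      ((show HasFDerivAt (hfun ∘ (Prod.snd : E × ℝ → ℝ)) _ (x, s) from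
        hd.hasFDerivAt.comp (x, s) hasFDerivAt_snd).const_mul C)
  have h2 : HasFDerivAt (Fsplit f C)
      ((((fderiv ℝ f x).comp (ContinuousLinearMap.fst ℝ E ℝ)) +
        C • ((ContinuousLinearMap.smulRight (1 : ℝ →L[ℝ] ℝ) d).comp
          (ContinuousLinearMap.snd ℝ E ℝ))).comp
        (eL.toContinuousLinearMap)) p :=
    (show HasFDerivAt ((fun q : E × ℝ => f q.1 + C * hfun q.2) ∘ eL) _ p from
      HasFDerivAt.comp p h1 eL.hasFDerivAt)
  have key : HasGradientAt (Fsplit f C)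
      ((WithLp.equiv 2 (E × ℝ)).symm (gradient f x, C * d)) p := by
    rw [hasGradientAt_iff_hasFDerivAt]
    refine h2.congr_fderiv (Eq.symm ?_)
    ext v
    rw [heL]
    have hinner : ∀ w : E, (inner ℝ (gradient f x) w : ℝ) = fderiv ℝ f x w := by
      intro w
      rw [gradient]
      exact InnerProductSpace.toDual_symm_apply
    simp [InnerProductSpace.toDual_apply_apply, WithLp.prod_inner_apply, hinner,
      RCLike.inner_apply, WithLp.toLp_fst, WithLp.toLp_snd,
      WithLp.prodContinuousLinearEquiv_apply, WithLp.ofLp_fst, WithLp.ofLp_snd]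
    ring
  exact key.gradient


lemma logistic_band (C : ℝ) (hC : 0 < C) (σ : ℝ → ℝ)
    (hσ : ∀ t, HasDerivAt σ (3 * C * σ t * (1 - σ t)) t)
    (t₁ : ℝ) (h1 : σ t₁ ∈ Set.Ioo (0 : ℝ) 1) :
    ∀ t, σ t ∈ Set.Ioo (0 : ℝ) 1 := by
  have hcont : Continuous σ :=
    continuous_iff_continuousAt.2 fun t => (hσ t).continuousAt
  set a : ℝ → ℝ := fun t => 3 * C * (1 - 2 * σ t) with ha
  have hacont : Continuous a := by continuity
  set A : ℝ → ℝ := fun t => ∫ u in t₁..t, a u with hA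
  have hAd : ∀ t, HasDerivAt A (a t) t := by
    intro t
    exact intervalIntegral.integral_hasDerivAt_right
      (hacont.intervalIntegrable _ _)
      (hacont.stronglyMeasurableAtFilter _ _)
      hacont.continuousAt
  set r : ℝ → ℝ := fun t => σ t * (1 - σ t) with hr
  have hrd : ∀ t, HasDerivAt r (a t * r t) t := by
    intro t
    have := (hσ t).mul ((hasDerivAt_const t (1:ℝ)).sub (hσ t))
    exact this.congr_deriv (by simp only [ha, hr, Pi.sub_apply]; ring)
  set w : ℝ → ℝ := fun t => r t * Real.exp (-A t) with hw
  have hwd : ∀ t, HasDerivAt w 0 t := by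
    intro t
    have := (hrd t).mul (((hAd t).neg).exp)
    exact this.congr_deriv (by ring)
  have hconst : ∀ t, w t = w t₁ :=
    fun t => is_const_of_deriv_eq_zero (fun u => (hwd u).differentiableAt)
      (fun u => (hwd u).deriv) t t₁
  have hrpos : ∀ t, 0 < r t := by
    intro t
    have h0 : w t₁ = r t₁ := by
      simp [hw, hA, intervalIntegral.integral_same]
    have hrt1 : 0 < r t₁ := mul_pos h1.1 (by linarith [h1.2])
    have := hconst t
    rw [h0] at this
    have hexp : 0 < Real.exp (-A t) := Real.exp_pos _
    have h2 : r t * Real.exp (-A t) = r t₁ := this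
    nlinarith [h2, hexp, hrt1]
  intro t
  have := hrpos t
  rcases mul_pos_iff.1 this with ⟨h, h'⟩ | ⟨h, h'⟩
  · exact ⟨h, by linarith⟩
  · linarith

lemma logistic_limits (C : ℝ) (hC : 0 < C) (σ : ℝ → ℝ)
    (hσ : ∀ t, HasDerivAt σ (3 * C * σ t * (1 - σ t)) t)
    (t₁ : ℝ) (h1 : σ t₁ ∈ Set.Ioo (0 : ℝ) 1)
    (hband : ∀ t, σ t ∈ Set.Ioo (0 : ℝ) 1) :
    StrictMono σ ∧ Tendsto σ atBot (𝓝 0) ∧ Tendsto σ atTop (𝓝 1) := by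
  have hderiv : ∀ t, deriv σ t = 3 * C * σ t * (1 - σ t) := fun t => (hσ t).deriv
  have h3 : (0:ℝ) < 3 * C := by linarith
  have hdpos : ∀ t, 0 < deriv σ t := by
    intro t
    rw [hderiv]
    have := hband t
    exact mul_pos (mul_pos h3 this.1) (by linarith [this.2])
  have hmono : StrictMono σ := strictMono_of_deriv_pos hdpos
  have hbdd : BddAbove (Set.range σ) :=
    ⟨1, by rintro _ ⟨t, rfl⟩; exact (hband t).2.le⟩
  have hbddB : BddBelow (Set.range σ) :=
    ⟨0, by rintro _ ⟨t, rfl⟩; exact (hband t).1.le⟩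
  have htop : Tendsto σ atTop (𝓝 (⨆ t, σ t)) := tendsto_atTop_ciSup hmono.monotone hbdd
  have hbot : Tendsto σ atBot (𝓝 (⨅ t, σ t)) := tendsto_atBot_ciInf hmono.monotone hbddB
  set L := ⨆ t, σ t with hL
  set M := ⨅ t, σ t with hM
  have hLle : L ≤ 1 := ciSup_le fun t => (hband t).2.le
  have hMge : 0 ≤ M := le_ciInf fun t => (hband t).1.le
  have hLge : ∀ t, σ t ≤ L := fun t => le_ciSup hbdd t
  have hMle : ∀ t, M ≤ σ t := fun t => ciInf_le hbddB t
  have hψ : ∀ (d : ℝ) u, HasDerivAt (fun x => σ x - d * x) (deriv σ u - d) u := by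
    intro d u
    have hid : HasDerivAt (fun x : ℝ => d * x) d u := by
      simpa using (hasDerivAt_id u).const_mul d
    have := (hσ u).sub hid
    rw [hderiv u]
    exact this
  have key : ∀ (d T : ℝ), (∀ t, T ≤ t → d ≤ deriv σ t) →
      ∀ t, T ≤ t → σ T + d * (t - T) ≤ σ t := by
    intro d T hd t ht
    have hmonoOn : MonotoneOn (fun u => σ u - d * u) (Set.Ici T) := by
      apply monotoneOn_of_deriv_nonneg (convex_Ici T)
        (fun u _ => (hψ d u).continuousAt.continuousWithinAt)
        (fun u _ => (hψ d u).differentiableAt.differentiableWithinAt)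
      intro u hu
      rw [interior_Ici] at hu
      rw [(hψ d u).deriv]
      linarith [hd u hu.le]
    have := hmonoOn (Set.self_mem_Ici) ht ht
    simp only at this
    linarith
  have keyB : ∀ (d T : ℝ), (∀ t, t ≤ T → d ≤ deriv σ t) →
      ∀ t, t ≤ T → σ t ≤ σ T - d * (T - t) := by
    intro d T hd t ht
    have hmonoOn : MonotoneOn (fun u => σ u - d * u) (Set.Iic T) := by
      apply monotoneOn_of_deriv_nonneg (convex_Iic T)
        (fun u _ => (hψ d u).continuousAt.continuousWithinAt)
        (fun u _ => (hψ d u).differentiableAt.differentiableWithinAt)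
      intro u hu
      rw [interior_Iic] at hu
      rw [(hψ d u).deriv]
      linarith [hd u hu.le]
    have := hmonoOn (Set.mem_Iic.2 ht) (Set.self_mem_Iic) ht
    simp only at this
    linarith
  have hL1 : L = 1 := by
    by_contra hne
    have hLlt : L < 1 := lt_of_le_of_ne hLle hne
    set d := 3 * C * (σ t₁ * (1 - L)) with hd
    have hdpos' : 0 < d := mul_pos h3 (mul_pos h1.1 (by linarith))
    have hder : ∀ t, t₁ ≤ t → d ≤ deriv σ t := by
      intro t ht
      rw [hderiv]
      have h1' := hband t
      have hs : σ t₁ ≤ σ t := hmono.monotone ht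
      have hsL : σ t ≤ L := hLge t
      have hmm : σ t₁ * (1 - L) ≤ σ t * (1 - σ t) :=
        mul_le_mul hs (by linarith) (by linarith) h1'.1.le
      calc d = 3 * C * (σ t₁ * (1 - L)) := hd
        _ ≤ 3 * C * (σ t * (1 - σ t)) := by nlinarith
        _ = 3 * C * σ t * (1 - σ t) := by ring
    set t := t₁ + 1 / d with htdef
    have ht : t₁ ≤ t := by
      rw [htdef]
      have : 0 < 1 / d := by positivity
      linarith
    have hk := key d t₁ hder t ht
    have hdt : d * (t - t₁) = 1 := by
      rw [htdef]; field_simp; try ring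
    have : (1:ℝ) < σ t := by nlinarith [h1.1, hdt, hk]
    linarith [(hband t).2]
  have hM0 : M = 0 := by
    by_contra hne
    have hMgt : 0 < M := lt_of_le_of_ne hMge (Ne.symm hne)
    set d := 3 * C * (M * (1 - σ t₁)) with hd
    have hdpos' : 0 < d := mul_pos h3 (mul_pos hMgt (by linarith [h1.2]))
    have hder : ∀ t, t ≤ t₁ → d ≤ deriv σ t := by
      intro t ht
      rw [hderiv]
      have h1' := hband t
      have hs : σ t ≤ σ t₁ := hmono.monotone ht
      have hsM : M ≤ σ t := hMle t
      have hmm : M * (1 - σ t₁) ≤ σ t * (1 - σ t) :=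
        mul_le_mul hsM (by linarith) (by linarith [h1.2]) h1'.1.le
      calc d = 3 * C * (M * (1 - σ t₁)) := hd
        _ ≤ 3 * C * (σ t * (1 - σ t)) := by nlinarith
        _ = 3 * C * σ t * (1 - σ t) := by ring
    set t := t₁ - 1 / d with htdef
    have ht : t ≤ t₁ := by
      rw [htdef]
      have : 0 < 1 / d := by positivity
      linarith
    have hkb := keyB d t₁ hder t ht
    have hdt : d * (t₁ - t) = 1 := by
      rw [htdef]; field_simp; try ring
    have : σ t ≤ σ t₁ - 1 := by nlinarith [hdt, hkb]
    linarith [(hband t).1, h1.2]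
  refine ⟨hmono, ?_, ?_⟩
  · rw [← hM0]; exact hbot
  · rw [← hL1]; exact htop

/-- If the ℝ-component `σ` of a gradient flow line `γ = (α, σ)` of the split
interpolation function `F` lies in `(0,1)` at some time, then it lies in `(0,1)` for all
times, is strictly increasing, and travels from `0` (at `-∞`) to `1` (at `+∞`). -/
theorem flow_crosses_band {E : Type*} [NormedAddCommGroup E] [InnerProductSpace ℝ E]
    [CompleteSpace E] (f : E → ℝ) (hf : Differentiable ℝ f) (C : ℝ) (hC : 0 < C)
    (α : ℝ → E) (σ : ℝ → ℝ)
    (hflow : ∀ t : ℝ, HasDerivAt (fun u => (WithLp.equiv 2 (E × ℝ)).symm (α u, σ u))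
        (-(gradient (Fsplit f C) ((WithLp.equiv 2 (E × ℝ)).symm (α t, σ t)))) t)
    (hband : ∃ t₁ : ℝ, σ t₁ ∈ Set.Ioo (0 : ℝ) 1) :
    (∀ t : ℝ, σ t ∈ Set.Ioo (0 : ℝ) 1) ∧
    StrictMono σ ∧
    Tendsto σ atBot (𝓝 0) ∧
    Tendsto σ atTop (𝓝 1) := by
  obtain ⟨t₁, h1⟩ := hband
  -- extract the scalar ODE for σ
  have hσ : ∀ t, HasDerivAt σ (3 * C * σ t * (1 - σ t)) t := by
    intro t
    set π : WithLp 2 (E × ℝ) →L[ℝ] ℝ :=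
      (ContinuousLinearMap.snd ℝ E ℝ).comp
        (WithLp.prodContinuousLinearEquiv 2 ℝ E ℝ).toContinuousLinearMap with hπ
    have h2 := π.hasFDerivAt.comp_hasDerivAt t (hflow t)
    have hfun_eq : (⇑π ∘ fun u => (WithLp.equiv 2 (E × ℝ)).symm (α u, σ u)) = σ := rfl
    rw [hfun_eq] at h2
    rw [grad_Fsplit f hf C (α t) (σ t)] at h2
    have hval : π (-(WithLp.equiv 2 (E × ℝ)).symm
        (gradient f (α t), C * (3 * (σ t) ^ 2 - 3 * σ t))) =
        -(C * (3 * (σ t) ^ 2 - 3 * σ t)) := by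
      rw [map_neg]
      rfl
    rw [hval] at h2
    exact h2.congr_deriv (by ring)
  have hband' := logistic_band C hC σ hσ t₁ h1
  have hlim := logistic_limits C hC σ hσ t₁ h1 hband'
  exact ⟨hband', hlim⟩
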